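/- Let p ≥ d and let Q* ∈ SO(p)^n be a first-order critical point of the Shonan objective g on SO(p)^n. Then S* = Π(Q*) is a first-order critical point of f on St(d,p)^n. -/

import Mathlib

open Matrix BigOperators

noncomputable section

/-- `SO(k)`: real special orthogonal `k × k` matrices. -/
def SOset (k : ℕ) : Set (Matrix (Fin k) (Fin k) ℝ) :=
  {Q | Qᵀ * Q = 1 ∧ Q.det = 1}

/-- The Stiefel manifold `St(d,p)`: real `p × d` matrices with orthonormal columns. -/
def StiefelSet (d p : ℕ) : Set (Matrix (Fin p) (Fin d) ℝ) :=
  {Y | Yᵀ * Y = 1}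

/-- Assemble an `n`-tuple of `p × d` blocks into a `p × (dn)` matrix. -/
def flatten {n d p : ℕ} (S : Fin n → Matrix (Fin p) (Fin d) ℝ) :
    Matrix (Fin p) (Fin n × Fin d) ℝ :=
  fun a ib => S ib.1 a ib.2

/-- The `i`-th block column of a `p × (dn)` matrix. -/
def blockCol {n d p : ℕ} (M : Matrix (Fin p) (Fin n × Fin d) ℝ) (i : Fin n) :
    Matrix (Fin p) (Fin d) ℝ :=
  fun a b => M a (i, b)

/-- Membership of all block columns in `St(d,p)`, i.e. `S ∈ St(d,p)^n`. -/
def StProdFeas {n d p : ℕ} (M : Matrix (Fin p) (Fin n × Fin d) ℝ) : Prop :=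
  ∀ i : Fin n, blockCol M i ∈ StiefelSet d p

/-- The connection Laplacian of the measurements `(E, κ, Rbar)`. -/
def connLap {n d : ℕ} (E : Finset (Fin n × Fin n)) (κ : Fin n × Fin n → ℝ)
    (Rbar : Fin n × Fin n → Matrix (Fin d) (Fin d) ℝ) :
    Matrix (Fin n × Fin d) (Fin n × Fin d) ℝ :=
  fun x y =>
    if x.1 = y.1 then
      (∑ j : Fin n, ((if (x.1, j) ∈ E then κ (x.1, j) else 0) +
          (if (j, x.1) ∈ E then κ (j, x.1) else 0))) *
        (if x.2 = y.2 then (1 : ℝ) else 0)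
    else if (x.1, y.1) ∈ E then -κ (x.1, y.1) * Rbar (x.1, y.1) x.2 y.2
    else if (y.1, x.1) ∈ E then -κ (y.1, x.1) * Rbar (y.1, x.1) y.2 x.2
    else 0

/-- SDP feasibility: positive semidefinite with identity diagonal `d × d` blocks. -/
def SDPFeasible {n d : ℕ} (Z : Matrix (Fin n × Fin d) (Fin n × Fin d) ℝ) : Prop :=
  Z.PosSemidef ∧ ∀ (i : Fin n) (a b : Fin d), Z (i, a) (i, b) = if a = b then (1 : ℝ) else 0

/-- The objective `f(S) = trace (L Sᵀ S)`. -/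
def fObj {n d p : ℕ} (L : Matrix (Fin n × Fin d) (Fin n × Fin d) ℝ)
    (S : Matrix (Fin p) (Fin n × Fin d) ℝ) : ℝ :=
  (L * (Sᵀ * S)).trace

/-- The `p × d` matrix `P = [I_d ; 0]`. -/
def Pmat (d p : ℕ) : Matrix (Fin p) (Fin d) ℝ :=
  fun a b => if (a : ℕ) = (b : ℕ) then 1 else 0

/-- The projection `Π : SO(p)^n → St(d,p)^n`, as a `p × (dn)` matrix. -/
def bigProj {n d p : ℕ} (Q : Fin n → Matrix (Fin p) (Fin p) ℝ) :
    Matrix (Fin p) (Fin n × Fin d) ℝ :=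
  flatten (fun i => Q i * Pmat d p)

/-- First-order criticality of `f` on `St(d,p)^n`: along every (componentwise) `C¹` curve
through `S` in `St(d,p)^n`, the derivative of `f ∘ γ` vanishes at `0`. -/
def IsCriticalSt {n d p : ℕ} (L : Matrix (Fin n × Fin d) (Fin n × Fin d) ℝ)
    (S : Matrix (Fin p) (Fin n × Fin d) ℝ) : Prop :=
  ∀ γ : ℝ → Matrix (Fin p) (Fin n × Fin d) ℝ,
    (∀ a ib, ContDiff ℝ 1 fun t => γ t a ib) → (∀ t, StProdFeas (γ t)) → γ 0 = S →
    deriv (fun t => fObj L (γ t)) 0 = 0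

/-- Second-order criticality of `f` on `St(d,p)^n`. -/
def IsSecondOrderCriticalSt {n d p : ℕ} (L : Matrix (Fin n × Fin d) (Fin n × Fin d) ℝ)
    (S : Matrix (Fin p) (Fin n × Fin d) ℝ) : Prop :=
  IsCriticalSt L S ∧
  ∀ γ : ℝ → Matrix (Fin p) (Fin n × Fin d) ℝ,
    (∀ a ib, ContDiff ℝ 2 fun t => γ t a ib) → (∀ t, StProdFeas (γ t)) → γ 0 = S →
    0 ≤ iteratedDeriv 2 (fun t => fObj L (γ t)) 0

/-- First-order criticality of the Shonan objective `g = f ∘ Π` on `SO(p)^n`. -/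
def IsCriticalSO {n d p : ℕ} (L : Matrix (Fin n × Fin d) (Fin n × Fin d) ℝ)
    (Q : Fin n → Matrix (Fin p) (Fin p) ℝ) : Prop :=
  ∀ γ : ℝ → (Fin n → Matrix (Fin p) (Fin p) ℝ),
    (∀ i a b, ContDiff ℝ 1 fun t => γ t i a b) → (∀ t i, γ t i ∈ SOset p) → γ 0 = Q →
    deriv (fun t => fObj L (bigProj (γ t))) 0 = 0

/-- `SymBlockDiag`: zero out all entries outside the `n` diagonal `d × d` blocks. -/
def symBlockDiag {n d : ℕ} (M : Matrix (Fin n × Fin d) (Fin n × Fin d) ℝ) :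
    Matrix (Fin n × Fin d) (Fin n × Fin d) ℝ :=
  fun x y => if x.1 = y.1 then M x y else 0

/-- The certificate matrix `C = L − (1/2)·SymBlockDiag(L SᵀS + SᵀS L)`. -/
def certMat {n d p : ℕ} (L : Matrix (Fin n × Fin d) (Fin n × Fin d) ℝ)
    (S : Matrix (Fin p) (Fin n × Fin d) ℝ) :
    Matrix (Fin n × Fin d) (Fin n × Fin d) ℝ :=
  L - (1 / 2 : ℝ) • symBlockDiag (L * (Sᵀ * S) + (Sᵀ * S) * L)

/-- The spectral norm (ℓ² operator norm) of a square real matrix. -/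
def specNorm {m : Type*} [Fintype m] [DecidableEq m] (A : Matrix m m ℝ) : ℝ :=
  ‖Matrix.toEuclideanCLM (𝕜 := ℝ) A‖

/-- Squared Frobenius norm. -/
def frobSq {m k : ℕ} (M : Matrix (Fin m) (Fin k) ℝ) : ℝ :=
  ∑ a, ∑ b, (M a b) ^ 2



open NormedSpace in
lemma exp_curve {k : ℕ} (M : Matrix (Fin k) (Fin k) ℝ)
    (l : Matrix (Fin k) (Fin k) ℝ →ₗ[ℝ] ℝ) :
    ContDiff ℝ 1 (fun t : ℝ => l (exp (t • M))) ∧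
      HasDerivAt (fun t : ℝ => l (exp (t • M))) (l M) 0 := by
  letI : SeminormedRing (Matrix (Fin k) (Fin k) ℝ) := Matrix.linftyOpSemiNormedRing
  letI : NormedRing (Matrix (Fin k) (Fin k) ℝ) := Matrix.linftyOpNormedRing
  letI : NormedAlgebra ℝ (Matrix (Fin k) (Fin k) ℝ) := Matrix.linftyOpNormedAlgebra
  have hd : ∀ t : ℝ, HasDerivAt (fun u : ℝ => exp (u • M)) (exp (t • M) * M) t :=
    fun t => hasDerivAt_exp_smul_const M t
  have hdiff : Differentiable ℝ (fun u : ℝ => exp (u • M)) := fun t => (hd t).differentiableAt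
  have hC : ContDiff ℝ 1 (fun u : ℝ => exp (u • M)) := by
    rw [contDiff_one_iff_deriv]
    refine ⟨hdiff, ?_⟩
    have hder : deriv (fun u : ℝ => exp (u • M)) = fun t => exp (t • M) * M :=
      funext fun t => (hd t).deriv
    erw [hder]
    exact hdiff.continuous.mul continuous_const
  set L := LinearMap.toContinuousLinearMap l with hL
  constructor
  · exact L.contDiff.comp hC
  · have h0 := hd 0
    rw [zero_smul, exp_zero, one_mul] at h0
    exact L.hasFDerivAt.comp_hasDerivAt 0 h0

open NormedSpace in
lemma exp_skew_orth {k : ℕ} (M : Matrix (Fin k) (Fin k) ℝ) (hM : Mᵀ = -M) (t : ℝ) :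
    (exp (t • M))ᵀ * exp (t • M) = 1 ∧ (exp (t • M)).det = 1 := by
  have ht : (t • M)ᵀ = -(t • M) := by rw [transpose_smul, hM, smul_neg]
  have horth : (exp (t • M))ᵀ * exp (t • M) = 1 := by
    rw [← Matrix.exp_transpose, ht, ← Matrix.exp_add_of_commute (-(t • M)) (t • M) (Commute.neg_left rfl),
      neg_add_cancel, exp_zero]
  refine ⟨horth, ?_⟩
  have hsq : (exp (t • M)).det * (exp (t • M)).det = 1 := by
    have h := congrArg Matrix.det horth
    rwa [Matrix.det_mul, Matrix.det_transpose, Matrix.det_one] at h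
  have hnn : 0 ≤ (exp (t • M)).det := by
    have hhalf : t • M = (t / 2) • M + (t / 2) • M := by rw [← add_smul, add_halves]
    rw [hhalf, Matrix.exp_add_of_commute _ _ rfl, Matrix.det_mul]
    exact mul_self_nonneg _
  rcases mul_self_eq_one_iff.mp hsq with h | h
  · exact h
  · linarith

lemma fObj_eq_sum {n d p : ℕ} (L : Matrix (Fin n × Fin d) (Fin n × Fin d) ℝ)
    (M : Matrix (Fin p) (Fin n × Fin d) ℝ) :
    fObj L M = ∑ x, ∑ y, L x y * ∑ a, M a y * M a x := by
  simp only [fObj, Matrix.trace, Matrix.diag, Matrix.mul_apply, Matrix.transpose_apply,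
    Finset.mul_sum]

lemma hasDerivAt_fObj {n d p : ℕ} (L : Matrix (Fin n × Fin d) (Fin n × Fin d) ℝ)
    (μ : ℝ → Matrix (Fin p) (Fin n × Fin d) ℝ) (D : Matrix (Fin p) (Fin n × Fin d) ℝ)
    (h : ∀ a ib, HasDerivAt (fun t => μ t a ib) (D a ib) 0) :
    HasDerivAt (fun t => fObj L (μ t))
      (∑ x, ∑ y, L x y * ∑ a, (D a y * μ 0 a x + μ 0 a y * D a x)) 0 := by
  simp only [fObj_eq_sum]
  apply HasDerivAt.fun_sum; intro x _
  apply HasDerivAt.fun_sum; intro y _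
  apply HasDerivAt.const_mul
  apply HasDerivAt.fun_sum; intro a _
  exact (h a y).mul (h a x)

lemma PtP_eq_one {d p : ℕ} (hdp : d ≤ p) : (Pmat d p)ᵀ * Pmat d p = 1 := by
  ext b c
  simp only [Matrix.mul_apply, Matrix.transpose_apply, Pmat, Matrix.one_apply]
  rw [Finset.sum_eq_single (⟨(b : ℕ), lt_of_lt_of_le b.isLt hdp⟩ : Fin p)]
  · simp [Fin.ext_iff, eq_comm]
  · intro a _ ha
    have hne : (a : ℕ) ≠ (b : ℕ) := fun h => ha (Fin.ext h)
    simp [hne]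
  · intro h; exact absurd (Finset.mem_univ _) h

/-- If `Q*` is a first-order critical point of the Shonan objective `g` on
`SO(p)^n`, then `S* = Π(Q*)` is a first-order critical point of `f` on `St(d,p)^n`. -/
theorem statement8 {n d p : ℕ} (hn : 1 ≤ n) (hd : 1 ≤ d) (hdp : d ≤ p)
    (E : Finset (Fin n × Fin n)) (hE : ∀ e ∈ E, e.1 < e.2)
    (κ : Fin n × Fin n → ℝ) (hκ : ∀ e ∈ E, 0 ≤ κ e)
    (Rbar : Fin n × Fin n → Matrix (Fin d) (Fin d) ℝ)
    (hRbar : ∀ e ∈ E, Rbar e ∈ SOset d)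
    (Qstar : Fin n → Matrix (Fin p) (Fin p) ℝ) (hQ : ∀ i, Qstar i ∈ SOset p)
    (hcrit : IsCriticalSO (connLap E κ Rbar) Qstar) :
    IsCriticalSt (connLap E κ Rbar) (bigProj Qstar) := by
  intro γ hC1 hfeas hγ0
  classical
  set L := connLap E κ Rbar with hLdef
  set Sd : Matrix (Fin p) (Fin n × Fin d) ℝ := fun a ib => deriv (fun t => γ t a ib) 0 with hSddef
  have hS : ∀ a ib, HasDerivAt (fun t => γ t a ib) (Sd a ib) 0 := fun a ib =>
    (((hC1 a ib).differentiable one_ne_zero) 0).hasDerivAt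
  set Pm := Pmat d p with hPmdef
  have hPtP : Pmᵀ * Pm = 1 := PtP_eq_one hdp
  have hS0 : ∀ i, blockCol (γ 0) i = Qstar i * Pm := by
    intro i; rw [hγ0]; rfl
  have hskewM : ∀ i, (blockCol Sd i)ᵀ * (Qstar i * Pm) + (Qstar i * Pm)ᵀ * blockCol Sd i = 0 := by
    intro i
    ext a b
    have hgc : ∀ t : ℝ, (∑ c, γ t c (i, a) * γ t c (i, b))
        = (1 : Matrix (Fin d) (Fin d) ℝ) a b := by
      intro t
      have h := hfeas t i
      simp only [StiefelSet, Set.mem_setOf_eq] at h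
      have h2 := congrFun (congrFun h a) b
      simpa [Matrix.mul_apply, Matrix.transpose_apply, blockCol] using h2
    have h1 : HasDerivAt (fun t => ∑ c, γ t c (i, a) * γ t c (i, b))
        (∑ c, (Sd c (i, a) * γ 0 c (i, b) + γ 0 c (i, a) * Sd c (i, b))) 0 := by
      apply HasDerivAt.fun_sum; intro c _; exact (hS c (i, a)).mul (hS c (i, b))
    have h2 : HasDerivAt (fun t : ℝ => ∑ c, γ t c (i, a) * γ t c (i, b)) 0 0 := by
      have he : (fun t : ℝ => ∑ c, γ t c (i, a) * γ t c (i, b))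
          = fun _ => (1 : Matrix (Fin d) (Fin d) ℝ) a b := funext hgc
      rw [he]; exact hasDerivAt_const _ _
    have h3 := h1.unique h2
    rw [← hS0 i]
    simp only [Matrix.add_apply, Matrix.mul_apply, Matrix.transpose_apply, blockCol,
      Matrix.zero_apply]
    rw [← Finset.sum_add_distrib]
    exact h3
  have hQQt : ∀ i, Qstar i * (Qstar i)ᵀ = 1 := fun i => mul_eq_one_comm.mp (hQ i).1
  set A : Fin n → Matrix (Fin p) (Fin d) ℝ := fun i => (Qstar i)ᵀ * blockCol Sd i with hAdef
  set Ω : Fin n → Matrix (Fin p) (Fin p) ℝ :=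
    fun i => A i * Pmᵀ - Pm * (A i)ᵀ - Pm * (Pmᵀ * A i) * Pmᵀ with hΩdef
  have hAtP : ∀ i, (A i)ᵀ * Pm = -(Pmᵀ * A i) := by
    intro i
    have e1 : (A i)ᵀ * Pm = (blockCol Sd i)ᵀ * (Qstar i * Pm) := by
      simp [hAdef, Matrix.transpose_mul, Matrix.mul_assoc]
    have e2 : Pmᵀ * A i = (Qstar i * Pm)ᵀ * blockCol Sd i := by
      simp [hAdef, Matrix.transpose_mul, Matrix.mul_assoc]
    rw [e1, e2]
    exact eq_neg_of_add_eq_zero_left (hskewM i)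
  have hΩskew : ∀ i, (Ω i)ᵀ = -(Ω i) := by
    intro i
    show (A i * Pmᵀ - Pm * (A i)ᵀ - Pm * (Pmᵀ * A i) * Pmᵀ)ᵀ
        = -(A i * Pmᵀ - Pm * (A i)ᵀ - Pm * (Pmᵀ * A i) * Pmᵀ)
    have h1 : (A i * Pmᵀ - Pm * (A i)ᵀ - Pm * (Pmᵀ * A i) * Pmᵀ)ᵀ
        = Pm * (A i)ᵀ - A i * Pmᵀ - Pm * (((A i)ᵀ * Pm) * Pmᵀ) := by
      simp [Matrix.transpose_sub, Matrix.transpose_mul, Matrix.mul_assoc]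
    rw [h1, hAtP i]
    simp only [Matrix.neg_mul, Matrix.mul_neg, sub_neg_eq_add, Matrix.mul_assoc]
    abel
  have hQΩP : ∀ i, Qstar i * Ω i * Pm = blockCol Sd i := by
    intro i
    have hΩP : Ω i * Pm = A i := by
      show (A i * Pmᵀ - Pm * (A i)ᵀ - Pm * (Pmᵀ * A i) * Pmᵀ) * Pm = A i
      rw [Matrix.sub_mul, Matrix.sub_mul, Matrix.mul_assoc (A i) Pmᵀ Pm, hPtP, Matrix.mul_one,
        Matrix.mul_assoc Pm (A i)ᵀ Pm, hAtP i,
        Matrix.mul_assoc (Pm * (Pmᵀ * A i)) Pmᵀ Pm, hPtP, Matrix.mul_one, Matrix.mul_neg]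
      abel
    rw [Matrix.mul_assoc, hΩP]
    show Qstar i * ((Qstar i)ᵀ * blockCol Sd i) = blockCol Sd i
    rw [← Matrix.mul_assoc, hQQt i, Matrix.one_mul]
  set η : ℝ → Fin n → Matrix (Fin p) (Fin p) ℝ :=
    fun t i => Qstar i * NormedSpace.exp (t • Ω i) with hηdef
  have hC1η : ∀ i a b, ContDiff ℝ 1 fun t => η t i a b := by
    intro i a b
    let l1 : Matrix (Fin p) (Fin p) ℝ →ₗ[ℝ] ℝ :=
      { toFun := fun X => (Qstar i * X) a b
        map_add' := by intro X Y; simp [Matrix.mul_add]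
        map_smul' := by intro c X; simp [Matrix.mul_smul] }
    exact (exp_curve (Ω i) l1).1
  have hfeasη : ∀ t i, η t i ∈ SOset p := by
    intro t i
    obtain ⟨ho, hdet⟩ := exp_skew_orth (Ω i) (hΩskew i) t
    constructor
    · show (Qstar i * NormedSpace.exp (t • Ω i))ᵀ * (Qstar i * NormedSpace.exp (t • Ω i)) = 1
      rw [Matrix.transpose_mul, Matrix.mul_assoc, ← Matrix.mul_assoc (Qstar i)ᵀ, (hQ i).1,
        Matrix.one_mul, ho]
    · show (Qstar i * NormedSpace.exp (t • Ω i)).det = 1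
      rw [Matrix.det_mul, (hQ i).2, hdet, one_mul]
  have hη0 : η 0 = Qstar := by
    funext i
    show Qstar i * NormedSpace.exp ((0 : ℝ) • Ω i) = Qstar i
    rw [zero_smul, NormedSpace.exp_zero, Matrix.mul_one]
  have hDη : ∀ a (ib : Fin n × Fin d), HasDerivAt (fun t => bigProj (η t) a ib) (Sd a ib) 0 := by
    rintro a ⟨i, b⟩
    let l2 : Matrix (Fin p) (Fin p) ℝ →ₗ[ℝ] ℝ :=
      { toFun := fun X => (Qstar i * X * Pm) a b
        map_add' := by intro X Y; simp [Matrix.mul_add, Matrix.add_mul]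
        map_smul' := by intro c X; simp [Matrix.mul_smul, Matrix.smul_mul] }
    have h := (exp_curve (Ω i) l2).2
    have hval : l2 (Ω i) = Sd a (i, b) := by
      show (Qstar i * Ω i * Pm) a b = Sd a (i, b)
      rw [hQΩP i]; rfl
    rw [hval] at h
    exact h
  have h1 := hasDerivAt_fObj L γ Sd hS
  have h2 := hasDerivAt_fObj L (fun t => bigProj (η t)) Sd hDη
  beta_reduce at h2
  have hval0 : bigProj (η 0) = γ 0 := by rw [hη0, hγ0]
  rw [hval0] at h2
  rw [h1.deriv, ← h2.deriv]
  exact hcrit η hC1η hfeasη hη0
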